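/- Let d ∈ {4,5}, let G be a simple graph, let k ≥ 1 be a natural number, let v be a vertex of G, and let 𝓜 be a matching adjacent to v with |𝓜| ≥ k + 2. Then G has a d-path vertex cover of size at most k if and only if G − v has a d-path vertex cover of size at most k − 1. -/

import Mathlib

open SimpleGraph

/-- `S` is a `d`-path vertex cover of `G`. -/
def IsPVC {V : Type*} (G : SimpleGraph V) (d : ℕ) (S : Set V) : Prop :=
  ∀ ⦃u v : V⦄ (p : G.Walk u v), p.IsPath → p.length + 1 = d → ∃ x ∈ p.support, x ∈ S

/-- `S` is a `d`-path vertex cover of the induced subgraph `G[A]`. -/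
def IsPVCOn {V : Type*} (G : SimpleGraph V) (d : ℕ) (A S : Set V) : Prop :=
  ∀ ⦃u v : V⦄ (p : G.Walk u v), p.IsPath → p.length + 1 = d →
    (∀ x ∈ p.support, x ∈ A) → ∃ x ∈ p.support, x ∈ S

/-- `M` (a finite set of ordered pairs, each representing an edge) is a matching in `G − v`
such that every edge of the matching has at least one endpoint adjacent to `v` in `G`. -/
def MatchingAdjTo {V : Type*} (G : SimpleGraph V) (v : V) (M : Finset (V × V)) : Prop :=
  (∀ e ∈ M, G.Adj e.1 e.2 ∧ e.1 ≠ v ∧ e.2 ≠ v ∧ (G.Adj v e.1 ∨ G.Adj v e.2)) ∧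
  (∀ e ∈ M, ∀ f ∈ M, e ≠ f → e.1 ≠ f.1 ∧ e.1 ≠ f.2 ∧ e.2 ≠ f.1 ∧ e.2 ≠ f.2)

/-- The high-degree rule: if `d ∈ {4,5}`, `k ≥ 1` and there is a matching adjacent to `v` of
size at least `k + 2`, then `G` has a `d`-path vertex cover of size at most `k` iff
`G − v` has a `d`-path vertex cover of size at most `k − 1`. -/
theorem matching_rule {V : Type*} (G : SimpleGraph V) (d k : ℕ)
    (hd : d = 4 ∨ d = 5) (hk : 1 ≤ k)
    (v : V) (M : Finset (V × V)) (hM : MatchingAdjTo G v M)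
    (hMcard : k + 2 ≤ M.card) :
    (∃ S : Finset V, S.card ≤ k ∧ IsPVC G d ↑S) ↔
      (∃ S : Finset V, S.card ≤ k - 1 ∧ v ∉ S ∧ IsPVCOn G d ({v}ᶜ : Set V) ↑S) := by
  classical
  obtain ⟨hM1, hM2⟩ := hM
  constructor
  · rintro ⟨S, hScard, hSpvc⟩
    have hvS : v ∈ S := by
      by_contra hv
      set Bad := M.filter (fun e => e.1 ∈ S ∨ e.2 ∈ S) with hBadDef
      have hBadcard : Bad.card ≤ S.card := by
        apply Finset.card_le_card_of_injOn (fun e => if e.1 ∈ S then e.1 else e.2)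
        · intro e he
          simp only [hBadDef, Finset.mem_coe, Finset.mem_filter] at he
          simp only [Finset.mem_coe]
          split
          · assumption
          · tauto
        · intro e he f hf heq
          by_contra hne
          simp only [hBadDef, Finset.mem_coe, Finset.mem_filter] at he hf
          have h4 := hM2 e he.1 f hf.1 hne
          simp only at heq
          split_ifs at heq <;> simp_all
      have h2 : 2 ≤ (M \ Bad).card := by
        have hsub : Bad ⊆ M := Finset.filter_subset _ _
        have := Finset.card_sdiff_of_subset hsub
        omega
      obtain ⟨e, he, f, hf, hef⟩ := Finset.one_lt_card.mp (show 1 < (M \ Bad).card by omega)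
      have heM : e ∈ M := (Finset.mem_sdiff.mp he).1
      have hfM : f ∈ M := (Finset.mem_sdiff.mp hf).1
      have heS : e.1 ∉ S ∧ e.2 ∉ S := by
        have := (Finset.mem_sdiff.mp he).2
        simp only [hBadDef, Finset.mem_filter, heM, true_and] at this
        tauto
      have hfS : f.1 ∉ S ∧ f.2 ∉ S := by
        have := (Finset.mem_sdiff.mp hf).2
        simp only [hBadDef, Finset.mem_filter, hfM, true_and] at this
        tauto
      -- extract oriented endpoints
      have key : ∀ g ∈ M, g.1 ∉ S → g.2 ∉ S →
          ∃ a b : V, G.Adj v a ∧ G.Adj a b ∧ a ∉ S ∧ b ∉ S ∧ a ≠ v ∧ b ≠ v ∧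
            ((a, b) = g ∨ (b, a) = g) := by
        intro g hg hg1 hg2
        obtain ⟨hadj, hne1, hne2, hva⟩ := hM1 g hg
        rcases hva with h | h
        · exact ⟨g.1, g.2, h, hadj, hg1, hg2, hne1, hne2, Or.inl rfl⟩
        · exact ⟨g.2, g.1, h, hadj.symm, hg2, hg1, hne2, hne1, Or.inr rfl⟩
      obtain ⟨a, b, hva, hab, haS, hbS, hav, hbv, hae⟩ := key e heM heS.1 heS.2
      obtain ⟨c, d2, hvc, hcd, hcS, hdS, hcv, hdv, hcf⟩ := key f hfM hfS.1 hfS.2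
      have h4 := hM2 e heM f hfM hef
      have hac : a ≠ c ∧ a ≠ d2 ∧ b ≠ c ∧ b ≠ d2 := by
        rcases hae with h | h <;> rcases hcf with h' | h' <;>
          (subst h; subst h'; simp only [] at h4; tauto)
      obtain ⟨hac, had, hbc, hbd⟩ := hac
      have hba : b ≠ a := hab.symm.ne
      have hdc : d2 ≠ c := hcd.symm.ne
      rcases hd with rfl | rfl
      · -- d = 4 : path b - a - v - c
        let p : G.Walk b c := Walk.cons hab.symm (Walk.cons hva.symm (Walk.cons hvc Walk.nil))
        have hp : p.IsPath := by
          simp [p, Walk.isPath_def, hba, hbv, hbc, hav, hac, hcv.symm]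
        obtain ⟨x, hx, hxS⟩ := hSpvc p hp rfl
        simp only [p, Walk.support_cons, Walk.support_nil, List.mem_cons,
          List.mem_singleton, List.not_mem_nil] at hx
        rcases hx with rfl | rfl | rfl | rfl | h
        · exact hbS hxS
        · exact haS hxS
        · exact hv hxS
        · exact hcS hxS
        · exact h.elim
      · -- d = 5 : path b - a - v - c - d2
        let p : G.Walk b d2 := Walk.cons hab.symm (Walk.cons hva.symm
          (Walk.cons hvc (Walk.cons hcd Walk.nil)))
        have hp : p.IsPath := by
          simp [p, Walk.isPath_def, hba, hbv, hbc, hbd, hav, hac, had, hcv.symm, hdv.symm, hdc.symm]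
        obtain ⟨x, hx, hxS⟩ := hSpvc p hp rfl
        simp only [p, Walk.support_cons, Walk.support_nil, List.mem_cons,
          List.mem_singleton, List.not_mem_nil] at hx
        rcases hx with rfl | rfl | rfl | rfl | rfl | h
        · exact hbS hxS
        · exact haS hxS
        · exact hv hxS
        · exact hcS hxS
        · exact hdS hxS
        · exact h.elim
    refine ⟨S.erase v, ?_, Finset.notMem_erase _ _, ?_⟩
    · have := Finset.card_erase_of_mem hvS
      omega
    · intro u w p hp hlen hsup
      obtain ⟨x, hx, hxS⟩ := hSpvc p hp hlen
      have hxv : x ≠ v := by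
        have := hsup x hx
        simpa using this
      exact ⟨x, hx, by simp [Finset.mem_erase, hxv, hxS]⟩
  · rintro ⟨S, hScard, hvS, hSpvc⟩
    refine ⟨insert v S, ?_, ?_⟩
    · have := Finset.card_insert_le v S
      omega
    · intro u w p hp hlen
      by_cases hvp : v ∈ p.support
      · exact ⟨v, hvp, by simp⟩
      · obtain ⟨x, hx, hxS⟩ := hSpvc p hp hlen (by
          intro x hx
          simp only [Set.mem_compl_iff, Set.mem_singleton_iff]
          rintro rfl; exact hvp hx)
        exact ⟨x, hx, by simp [hxS]⟩
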